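/- Fix σ > 0, k > 0, κ₁, κ₂, γ ∈ ℝ, T > 0, N ≥ 1. Write E(t) := e^{σk(t−T)} and â(t) := σE(t) + (κ₁/(kN))(1−E(t)) + κ₂/N. Let η, η_m : [0,T] → ℝ be the C¹ functions with η(T) = η_m(T) = 0 solving η'(t) = −â(t)·( (σ/2)E(t) + (κ₁/k·(1−E(t)) + κ₂)(1 − 1/(2N)) ) + (γσ²/2)E(t)² and η_m'(t) = −σ â(t) E(t). For x ∈ ℝ^N and i ∈ {1,…,N} define v^i(t,x) := E(t)x_i + (κ₁/(σkN))(1−E(t))·Σ_{ℓ=1}^N x_ℓ + η(t) and v^{m,i}(t,x) := E(t)x_i + η_m(t). Then on [0,T) × ℝ^N: (a) σ ∂_{x_i} v^i(t,x) + κ₂/N = â(t); (b) ∂_t v^i + σ Σ_{ℓ=1}^N (â(t) − k x_ℓ) ∂_{x_ℓ} v^i + (σ²/2) Σ_{ℓ=1}^N ∂²_{x_ℓ x_ℓ} v^i − â(t)²/2 + (κ₁/N) Σ_{ℓ=1}^N x_ℓ + κ₂ â(t) − (γσ²/2) Σ_{ℓ=1}^N (∂_{x_ℓ} v^{m,i})²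 = 0; (c) ∂_t v^{m,i} + σ Σ_{ℓ=1}^N (â(t) − k x_ℓ) ∂_{x_ℓ} v^{m,i} + (σ²/2) Σ_{ℓ=1}^N ∂²_{x_ℓ x_ℓ} v^{m,i} = 0; (d) v^i(T,x) = x_i and v^{m,i}(T,x) = x_i. -/

import Mathlib

open Finset

private lemma dlin (A B y : ℝ) : deriv (fun s => A * s + B) y = A := by
  simpa using (((hasDerivAt_id y).const_mul A).add_const B).deriv

private lemma ddlin (A B y : ℝ) : deriv (deriv (fun s : ℝ => A * s + B)) y = 0 := by
  have : deriv (fun s : ℝ => A * s + B) = fun _ => A := funext fun z => dlin A B z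
  rw [this]; simp

theorem stmt8 (σ k κ₁ κ₂ γ T : ℝ) (N : ℕ)
    (hσ : 0 < σ) (hk : 0 < k) (hT : 0 < T) (hN : 1 ≤ N)
    (η ηm : ℝ → ℝ) (hηT : η T = 0) (hηmT : ηm T = 0)
    (hη : ∀ t ∈ Set.Icc (0:ℝ) T,
      HasDerivAt η
        (-(σ * Real.exp (σ*k*(t-T)) + κ₁/(k*(N:ℝ)) * (1 - Real.exp (σ*k*(t-T))) + κ₂/(N:ℝ))
            * ((σ/2) * Real.exp (σ*k*(t-T))
              + (κ₁/k * (1 - Real.exp (σ*k*(t-T))) + κ₂) * (1 - 1/(2*(N:ℝ))))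
          + γ*σ^2/2 * (Real.exp (σ*k*(t-T)))^2) t)
    (hηm : ∀ t ∈ Set.Icc (0:ℝ) T,
      HasDerivAt ηm
        (-(σ * (σ * Real.exp (σ*k*(t-T)) + κ₁/(k*(N:ℝ)) * (1 - Real.exp (σ*k*(t-T))) + κ₂/(N:ℝ))
            * Real.exp (σ*k*(t-T)))) t) :
    let E : ℝ → ℝ := fun t => Real.exp (σ*k*(t-T))
    let ahat : ℝ → ℝ := fun t => σ * E t + κ₁/(k*(N:ℝ)) * (1 - E t) + κ₂/(N:ℝ)
    let v : Fin N → ℝ → (Fin N → ℝ) → ℝ := fun i t x =>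
      E t * x i + κ₁/(σ*k*(N:ℝ)) * (1 - E t) * (∑ ℓ, x ℓ) + η t
    let vm : Fin N → ℝ → (Fin N → ℝ) → ℝ := fun i t x => E t * x i + ηm t
    ∀ i : Fin N, ∀ t ∈ Set.Ico (0:ℝ) T, ∀ x : Fin N → ℝ,
      (σ * deriv (fun s => v i t (Function.update x i s)) (x i) + κ₂/(N:ℝ) = ahat t) ∧
      (deriv (fun s => v i s x) t
        + σ * ∑ ℓ, (ahat t - k * x ℓ) * deriv (fun s => v i t (Function.update x ℓ s)) (x ℓ)
        + σ^2/2 * ∑ ℓ, deriv (deriv (fun s => v i t (Function.update x ℓ s))) (x ℓ)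
        - (ahat t)^2/2 + κ₁/(N:ℝ) * ∑ ℓ, x ℓ + κ₂ * ahat t
        - γ*σ^2/2 * ∑ ℓ, (deriv (fun s => vm i t (Function.update x ℓ s)) (x ℓ))^2 = 0) ∧
      (deriv (fun s => vm i s x) t
        + σ * ∑ ℓ, (ahat t - k * x ℓ) * deriv (fun s => vm i t (Function.update x ℓ s)) (x ℓ)
        + σ^2/2 * ∑ ℓ, deriv (deriv (fun s => vm i t (Function.update x ℓ s))) (x ℓ) = 0) ∧
      (v i T x = x i ∧ vm i T x = x i) := by
  intro E ahat v vm i t ht x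
  have hN0 : (N:ℝ) ≠ 0 := by positivity
  have htI : t ∈ Set.Icc (0:ℝ) T := ⟨ht.1, ht.2.le⟩
  set e : ℝ := Real.exp (σ*k*(t-T)) with he
  set c : ℝ := κ₁/(σ*k*(N:ℝ)) with hc
  set a : ℝ := σ * e + κ₁/(k*(N:ℝ)) * (1 - e) + κ₂/(N:ℝ) with ha
  -- spatial structure of v
  have hvfun : ∀ ℓ : Fin N, (fun s => v i t (Function.update x ℓ s))
      = fun s => ((if ℓ = i then e else 0) + c * (1 - e)) * s
        + (e * (if ℓ = i then 0 else x i) + c * (1 - e) * (∑ m ∈ univ \ {ℓ}, x m) + η t) := by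
    intro ℓ; funext s
    have hsum : ∑ m, Function.update x ℓ s m = s + ∑ m ∈ univ \ {ℓ}, x m :=
      Finset.sum_update_of_mem (Finset.mem_univ ℓ) x s
    simp only [v]
    rw [hsum, Function.update_apply]
    by_cases h : i = ℓ
    · simp [h]; ring
    · simp [h, Ne.symm h]; ring
  have hvmfun : ∀ ℓ : Fin N, (fun s => vm i t (Function.update x ℓ s))
      = fun s => (if ℓ = i then e else 0) * s
        + (e * (if ℓ = i then 0 else x i) + ηm t) := by
    intro ℓ; funext s
    simp only [vm]
    rw [Function.update_apply]
    by_cases h : i = ℓ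
    · simp [h]; exact Or.inl rfl
    · simp [h, Ne.symm h]; exact Or.inl rfl
  have hdv : ∀ ℓ : Fin N, deriv (fun s => v i t (Function.update x ℓ s)) (x ℓ)
      = (if ℓ = i then e else 0) + c * (1 - e) := by
    intro ℓ; rw [hvfun ℓ]; exact dlin _ _ _
  have hddv : ∀ ℓ : Fin N, deriv (deriv (fun s => v i t (Function.update x ℓ s))) (x ℓ) = 0 := by
    intro ℓ; rw [hvfun ℓ]; exact ddlin _ _ _
  have hdvm : ∀ ℓ : Fin N, deriv (fun s => vm i t (Function.update x ℓ s)) (x ℓ)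
      = (if ℓ = i then e else 0) := by
    intro ℓ; rw [hvmfun ℓ]; exact dlin _ _ _
  have hddvm : ∀ ℓ : Fin N, deriv (deriv (fun s => vm i t (Function.update x ℓ s))) (x ℓ) = 0 := by
    intro ℓ; rw [hvmfun ℓ]; exact ddlin _ _ _
  -- time derivatives
  have hE : HasDerivAt (fun s : ℝ => Real.exp (σ*k*(s-T))) (σ*k*e) t := by
    have h1 : HasDerivAt (fun s : ℝ => σ*k*(s-T)) (σ*k) t := by
      simpa using ((hasDerivAt_id t).sub_const T).const_mul (σ*k)
    simpa [he, mul_comm] using h1.exp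
  have hdvt : deriv (fun s => v i s x) t
      = σ*k*e * x i - c*(σ*k*e) * (∑ ℓ, x ℓ) + deriv η t := by
    have hη' := hη t htI
    have h2 := ((hE.mul_const (x i)).add
        ((((hasDerivAt_const t (1:ℝ)).sub hE).const_mul c).mul_const (∑ ℓ, x ℓ))).add hη'
    rw [(show HasDerivAt (fun s => v i s x) _ t from h2).deriv, hη'.deriv]; ring
  have hdvmt : deriv (fun s => vm i s x) t = σ*k*e * x i + deriv ηm t := by
    have hm' := hηm t htI
    rw [(show HasDerivAt (fun s => vm i s x) _ t from (hE.mul_const (x i)).add hm').deriv, hm'.deriv]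
  have hηd : deriv η t = -a * ((σ/2) * e + (κ₁/k * (1 - e) + κ₂) * (1 - 1/(2*(N:ℝ))))
      + γ*σ^2/2 * e^2 := (hη t htI).deriv
  have hηmd : deriv ηm t = -(σ * a * e) := (hηm t htI).deriv
  have hat : ahat t = a := rfl
  refine ⟨?_, ?_, ?_, ?_, ?_⟩
  · rw [hdv i, hat, ha, hc]; simp; field_simp
  · simp only [hdv, hddv, hdvm, hdvt, hηd, hat]
    have hs1 : ∑ ℓ : Fin N, (a - k * x ℓ) * ((if ℓ = i then e else 0) + c * (1 - e))
        = (a - k * x i) * e + ((N:ℝ) * (a * (c * (1 - e))) - (c * (1 - e) * k) * ∑ ℓ, x ℓ) := by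
      have hterm : ∀ ℓ : Fin N, (a - k * x ℓ) * ((if ℓ = i then e else 0) + c * (1 - e))
          = (if ℓ = i then (a - k * x ℓ) * e else 0)
            + (a * (c * (1 - e)) - (c * (1 - e) * k) * x ℓ) := by
        intro ℓ; by_cases h : ℓ = i <;> simp [h] <;> ring
      rw [Finset.sum_congr rfl fun ℓ _ => hterm ℓ, Finset.sum_add_distrib,
        Finset.sum_ite_eq' univ i, Finset.sum_sub_distrib, Finset.sum_const,
        Finset.card_univ, Fintype.card_fin, nsmul_eq_mul, ← Finset.mul_sum]
      simp
    have hs2 : ∑ ℓ : Fin N, ((if ℓ = i then e else 0):ℝ)^2 = e^2 := by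
      simp [apply_ite (·^2), Finset.sum_ite_eq']
    rw [hs1, hs2]
    simp only [Finset.sum_const, Finset.card_univ, Fintype.card_fin, smul_zero]
    rw [ha, hc]
    generalize (∑ ℓ : Fin N, x ℓ) = S
    field_simp
    ring
  · simp only [hdvm, hddvm, hdvmt, hηmd, hat]
    have hs1 : ∑ ℓ : Fin N, (a - k * x ℓ) * (if ℓ = i then e else 0) = (a - k * x i) * e := by
      simp [mul_ite, Finset.sum_ite_eq']
    rw [hs1]
    simp only [Finset.sum_const, smul_zero]
    ring
  · simp [v, E, hηT]
  · simp [vm, E, hηmT]
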